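/- Let G be a finite simple triangle-free graph, let C be an edge 2-coloring of G, and let χ be a characteristic subgraph of G with respect to C whose maximum degree is at most 2. Then every vertex of degree 0 in χ has at most 2 neighbors in G that have degree 2 in χ, and every vertex u of degree 1 in χ has at most 1 neighbor w in G such that w has degree 2 in χ and the edge uw is not an edge of χ. -/
import Mathlib


open SimpleGraph

/-- `C` is an edge 2-coloring of `G`: for every vertex, the edges incident to it
carry at most 2 distinct colors. -/
def IsEdge2Coloring {V : Type*} (G : SimpleGraph V) (C : Sym2 V → ℕ) : Prop :=
  ∀ v : V, (C '' G.incidenceSet v).ncard ≤ 2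

/-- The number of distinct colors used by a coloring `C` on the edges of `G`. -/
noncomputable def numColors {V : Type*} (G : SimpleGraph V) (C : Sym2 V → ℕ) : ℕ :=
  (C '' G.edgeSet).ncard

/-- `OPT G`: the maximum number of colors used by an edge 2-coloring of `G`. -/
noncomputable def OPT {V : Type*} (G : SimpleGraph V) : ℕ :=
  sSup {n : ℕ | ∃ C : Sym2 V → ℕ, IsEdge2Coloring G C ∧ numColors G C = n}

/-- `M` is a matching of `G`, given as a set of edges: the edges belong to `G` and
are pairwise vertex-disjoint. -/
def IsMatchingSet {V : Type*} (G : SimpleGraph V) (M : Set (Sym2 V)) : Prop :=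
  M ⊆ G.edgeSet ∧ ∀ e ∈ M, ∀ f ∈ M, e ≠ f → ∀ v : V, v ∈ e → v ∉ f

/-- `ALG G M`: number of colors produced by the matching based algorithm, i.e.
`|M|` plus the number of connected components of `G − M`. -/
noncomputable def ALG {V : Type*} (G : SimpleGraph V) (M : Set (Sym2 V)) : ℕ :=
  M.ncard + Nat.card (G.deleteEdges M).ConnectedComponent

/-- `H` is a characteristic subgraph of `G` with respect to the coloring `C`:
a subgraph of `G` containing exactly one edge of each color used by `C`. -/
def IsCharSubgraph {V : Type*} (G : SimpleGraph V) (C : Sym2 V → ℕ)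
    (H : SimpleGraph V) : Prop :=
  H ≤ G ∧ ∀ c ∈ C '' G.edgeSet, ∃! e, e ∈ H.edgeSet ∧ C e = c

section aux
variable {V : Type*} [Fintype V] {G : SimpleGraph V} {C : Sym2 V → ℕ} {H : SimpleGraph V}

lemma aux_color_inj (hH : IsCharSubgraph G C H) {e f : Sym2 V}
    (he : e ∈ H.edgeSet) (hf : f ∈ H.edgeSet) (hef : C e = C f) : e = f := by
  have hsub : H.edgeSet ⊆ G.edgeSet := edgeSet_mono hH.1
  obtain ⟨g, -, hu⟩ := hH.2 (C e) ⟨e, hsub he, rfl⟩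
  rw [hu e ⟨he, rfl⟩, hu f ⟨hf, hef.symm⟩]

lemma aux_mem_three {S : Set ℕ} (hfin : S.Finite) (hS : S.ncard ≤ 2) {a b c : ℕ}
    (ha : a ∈ S) (hb : b ∈ S) (hc : c ∈ S) : a = b ∨ a = c ∨ b = c := by
  by_contra h
  push_neg at h
  have : 2 < S.ncard := (Set.two_lt_ncard hfin).mpr ⟨a, ha, b, hb, c, hc, h.1, h.2.1, h.2.2⟩
  omega

lemma aux_keyA (hC : IsEdge2Coloring G C) (hH : IsCharSubgraph G C H)
    {u w : V} (ha : G.Adj u w) (hw2 : (H.neighborSet w).ncard = 2) :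
    ∃ x, H.Adj w x ∧ C s(w, x) = C s(u, w) := by
  obtain ⟨a, b, hab, hset⟩ := Set.ncard_eq_two.mp hw2
  have haw : H.Adj w a := by rw [← H.mem_neighborSet, hset]; simp
  have hbw : H.Adj w b := by rw [← H.mem_neighborSet, hset]; simp
  have hga : G.Adj w a := hH.1 haw
  have hgb : G.Adj w b := hH.1 hbw
  have hne : C s(w, a) ≠ C s(w, b) := by
    intro h
    exact hab (Sym2.congr_right.mp (aux_color_inj hH (H.mem_edgeSet.mpr haw)
      (H.mem_edgeSet.mpr hbw) h))
  have hfin : (C '' G.incidenceSet w).Finite := Set.Finite.image _ (Set.toFinite _)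
  have h1 : C s(w, a) ∈ C '' G.incidenceSet w := ⟨_, (G.mem_incidenceSet w a).mpr hga, rfl⟩
  have h2 : C s(w, b) ∈ C '' G.incidenceSet w := ⟨_, (G.mem_incidenceSet w b).mpr hgb, rfl⟩
  have h3 : C s(u, w) ∈ C '' G.incidenceSet w := by
    refine ⟨_, ⟨G.mem_edgeSet.mpr ha, ?_⟩, rfl⟩
    exact Sym2.mem_mk_right u w
  rcases aux_mem_three hfin (hC w) h3 h1 h2 with h | h | h
  · exact ⟨a, haw, h.symm⟩
  · exact ⟨b, hbw, h.symm⟩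
  · exact absurd h hne

lemma aux_no_pair (hfree : G.CliqueFree 3) (hC : IsEdge2Coloring G C)
    (hH : IsCharSubgraph G C H) {u w₁ w₂ : V}
    (ha₁ : G.Adj u w₁) (ha₂ : G.Adj u w₂)
    (hw₁ : (H.neighborSet w₁).ncard = 2) (hw₂ : (H.neighborSet w₂).ncard = 2)
    (hne : w₁ ≠ w₂) (hcol : C s(u, w₁) = C s(u, w₂)) : False := by
  obtain ⟨x₁, hx₁, hc₁⟩ := aux_keyA hC hH ha₁ hw₁
  obtain ⟨x₂, hx₂, hc₂⟩ := aux_keyA hC hH ha₂ hw₂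
  have heq : s(w₁, x₁) = s(w₂, x₂) :=
    aux_color_inj hH (H.mem_edgeSet.mpr hx₁) (H.mem_edgeSet.mpr hx₂)
      (by rw [hc₁, hc₂, hcol])
  classical
  have hw2mem : w₂ ∈ s(w₁, x₁) := heq ▸ Sym2.mem_mk_left w₂ x₂
  rcases Sym2.mem_iff.mp hw2mem with h | h
  · exact hne h.symm
  · have : G.Adj w₁ w₂ := hH.1 (h ▸ hx₁)
    exact hfree {u, w₁, w₂} (is3Clique_triple_iff.mpr ⟨ha₁, ha₂, this⟩)

lemma aux_no_match (hC : IsEdge2Coloring G C) (hH : IsCharSubgraph G C H)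
    {u w x : V} (ha : G.Adj u w) (hw2 : (H.neighborSet w).ncard = 2)
    (hnH : ¬ H.Adj u w) (hx : H.Adj u x) (hcol : C s(u, w) = C s(u, x)) : False := by
  obtain ⟨x₁, hx₁, hc₁⟩ := aux_keyA hC hH ha hw2
  have heq : s(w, x₁) = s(u, x) :=
    aux_color_inj hH (H.mem_edgeSet.mpr hx₁) (H.mem_edgeSet.mpr hx) (hc₁.trans hcol)
  have humem : u ∈ s(w, x₁) := heq ▸ Sym2.mem_mk_left u x
  rcases Sym2.mem_iff.mp humem with h | h
  · exact ha.ne h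
  · exact hnH ((h ▸ hx₁).symm)

end aux

/-- In a characteristic subgraph `H` (max degree ≤ 2) of a triangle-free graph: a vertex of
degree 0 in `H` has at most 2 neighbors of degree 2 in `H`, and a vertex of degree 1 in `H`
has at most 1 neighbor of degree 2 in `H` through an edge not in `H`. -/
theorem charSubgraph_degree_bounds_triangleFree {V : Type*} [Fintype V] (G : SimpleGraph V)
    (hfree : G.CliqueFree 3)
    (C : Sym2 V → ℕ) (hC : IsEdge2Coloring G C)
    (H : SimpleGraph V) (hH : IsCharSubgraph G C H)
    (hdeg : ∀ v : V, (H.neighborSet v).ncard ≤ 2) :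
    (∀ u : V, (H.neighborSet u).ncard = 0 →
      ({w : V | G.Adj u w ∧ (H.neighborSet w).ncard = 2}).ncard ≤ 2) ∧
    (∀ u : V, (H.neighborSet u).ncard = 1 →
      ({w : V | G.Adj u w ∧ (H.neighborSet w).ncard = 2 ∧ ¬ H.Adj u w}).ncard ≤ 1) := by
  constructor
  · intro u hu
    by_contra h
    push_neg at h
    obtain ⟨w₁, hm₁, w₂, hm₂, w₃, hm₃, h12, h13, h23⟩ :=
      (Set.two_lt_ncard (Set.toFinite _)).mp h
    have hfin : (C '' G.incidenceSet u).Finite := Set.Finite.image _ (Set.toFinite _)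
    have mem : ∀ w, G.Adj u w → C s(u, w) ∈ C '' G.incidenceSet u := fun w hw =>
      ⟨_, (G.mem_incidenceSet u w).mpr hw, rfl⟩
    rcases aux_mem_three hfin (hC u) (mem _ hm₁.1) (mem _ hm₂.1) (mem _ hm₃.1) with h | h | h
    · exact aux_no_pair hfree hC hH hm₁.1 hm₂.1 hm₁.2 hm₂.2 h12 h
    · exact aux_no_pair hfree hC hH hm₁.1 hm₃.1 hm₁.2 hm₃.2 h13 h
    · exact aux_no_pair hfree hC hH hm₂.1 hm₃.1 hm₂.2 hm₃.2 h23 h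
  · intro u hu
    obtain ⟨x, hx⟩ := Set.ncard_eq_one.mp hu
    have hux : H.Adj u x := by rw [← H.mem_neighborSet, hx]; rfl
    by_contra h
    push_neg at h
    obtain ⟨w₁, hm₁, w₂, hm₂, h12⟩ := (Set.one_lt_ncard (Set.toFinite _)).mp h
    have hfin : (C '' G.incidenceSet u).Finite := Set.Finite.image _ (Set.toFinite _)
    have mem : ∀ w, G.Adj u w → C s(u, w) ∈ C '' G.incidenceSet u := fun w hw =>
      ⟨_, (G.mem_incidenceSet u w).mpr hw, rfl⟩
    rcases aux_mem_three hfin (hC u) (mem _ hm₁.1) (mem _ hm₂.1) (mem _ (hH.1 hux))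
      with h' | h' | h'
    · exact aux_no_pair hfree hC hH hm₁.1 hm₂.1 hm₁.2.1 hm₂.2.1 h12 h'
    · exact aux_no_match hC hH hm₁.1 hm₁.2.1 hm₁.2.2 hux h'
    · exact aux_no_match hC hH hm₂.1 hm₂.2.1 hm₂.2.2 hux h'
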